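/- For any real numbers $p \in [2,3)$ and $s$ with $|s| < 1$, one has $\tfrac12\big((1+s)^p + (1-s)^p\big) \le 1 + \tfrac{p}{2}(p-1)s^2\big(1 + \tfrac{1}{12}(p-2)(p-3)s^2\big)$. -/

import Mathlib

open Real

private lemma aux_mono {f f' : ℝ → ℝ} {s : ℝ} (hs0 : 0 ≤ s)
    (hd : ∀ x ∈ Set.Icc (0:ℝ) s, HasDerivAt f (f' x) x)
    (hf' : ∀ x ∈ Set.Icc (0:ℝ) s, 0 ≤ f' x) : f 0 ≤ f s := by
  have hm : MonotoneOn f (Set.Icc 0 s) := by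
    apply monotoneOn_of_deriv_nonneg (convex_Icc 0 s)
    · exact fun x hx => (hd x hx).continuousAt.continuousWithinAt
    · intro x hx
      rw [interior_Icc] at hx
      exact (hd x (Set.Ioo_subset_Icc_self hx)).differentiableAt.differentiableWithinAt
    · intro x hx
      rw [interior_Icc] at hx
      rw [(hd x (Set.Ioo_subset_Icc_self hx)).deriv]
      exact hf' x (Set.Ioo_subset_Icc_self hx)
  exact hm (Set.left_mem_Icc.2 hs0) (Set.right_mem_Icc.2 hs0) hs0

private lemma base_two_le {r x : ℝ} (hr : r ≤ 0) (hx0 : 0 ≤ x) (hx1 : x < 1) :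
    2 ≤ (1 + x) ^ r + (1 - x) ^ r := by
  have h1 : (0:ℝ) < 1 + x := by linarith
  have h2 : (0:ℝ) < 1 - x := by linarith
  have ha : 0 < (1 + x) ^ r := rpow_pos_of_pos h1 r
  have hb : 0 < (1 - x) ^ r := rpow_pos_of_pos h2 r
  have hab : 1 ≤ (1 + x) ^ r * (1 - x) ^ r := by
    rw [← Real.mul_rpow h1.le h2.le]
    have hle : (1 + x) * (1 - x) ≤ 1 := by nlinarith
    have hpos : 0 < (1 + x) * (1 - x) := mul_pos h1 h2
    exact Real.one_le_rpow_of_pos_of_le_one_of_nonpos hpos hle hr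
  nlinarith [sq_nonneg ((1 + x) ^ r - (1 - x) ^ r)]

private lemma step_h2 (p : ℝ) {s : ℝ} (hp2 : 2 ≤ p) (hp3 : p < 3) (hs0 : 0 ≤ s) (hs1 : s < 1) :
    0 ≤ (p-2)*(p-3)*s - (p-2)/2*((1+s)^(p-3) - (1-s)^(p-3)) := by
  have key := aux_mono (f := fun x : ℝ => (p-2)*(p-3)*x - (p-2)/2*((1+x)^(p-3) - (1-x)^(p-3)))
    (f' := fun x : ℝ => (p-2)*(p-3)*(1 - ((1+x)^(p-4) + (1-x)^(p-4))/2)) hs0 ?_ ?_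
  · have h0 : (1:ℝ) ^ (p-3) = 1 := Real.one_rpow _
    calc (0:ℝ) = (p-2)*(p-3)*0 - (p-2)/2*((1+0)^(p-3) - (1-0)^(p-3)) := by
          norm_num
      _ ≤ _ := key
  · intro x hx
    have h1 : (0:ℝ) < 1 + x := by have := hx.1; linarith
    have h2 : (0:ℝ) < 1 - x := by have := hx.2; linarith
    have dA : HasDerivAt (fun y : ℝ => (1+y)^(p-3)) (1 * (p-3) * (1+x)^(p-3-1)) x :=
      ((hasDerivAt_id x).const_add 1).rpow_const (Or.inl h1.ne')
    have dB : HasDerivAt (fun y : ℝ => (1-y)^(p-3)) ((-1) * (p-3) * (1-x)^(p-3-1)) x :=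
      ((hasDerivAt_id x).const_sub 1).rpow_const (Or.inl h2.ne')
    have e : p - 3 - 1 = p - 4 := by ring
    rw [e] at dA dB
    have := (((hasDerivAt_id x).const_mul ((p-2)*(p-3))).sub ((dA.sub dB).const_mul ((p-2)/2)))
    exact this.congr_deriv (by ring)
  · intro x hx
    have h1 : (1+x)^(p-4) + (1-x)^(p-4) ≥ 2 :=
      base_two_le (by linarith) hx.1 (lt_of_le_of_lt hx.2 hs1)
    have hpp : (p-2)*(p-3) ≤ 0 := mul_nonpos_of_nonneg_of_nonpos (by linarith) (by linarith)
    have : 1 - ((1+x)^(p-4) + (1-x)^(p-4))/2 ≤ 0 := by linarith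
    nlinarith

private lemma step_h1 (p : ℝ) {s : ℝ} (hp2 : 2 ≤ p) (hp3 : p < 3) (hs0 : 0 ≤ s) (hs1 : s < 1) :
    0 ≤ 1 + (p-2)*(p-3)/2*s^2 - ((1+s)^(p-2) + (1-s)^(p-2))/2 := by
  have key := aux_mono (f := fun x : ℝ => 1 + (p-2)*(p-3)/2*x^2 - ((1+x)^(p-2) + (1-x)^(p-2))/2)
    (f' := fun x : ℝ => (p-2)*(p-3)*x - (p-2)/2*((1+x)^(p-3) - (1-x)^(p-3))) hs0 ?_ ?_
  · calc (0:ℝ) = 1 + (p-2)*(p-3)/2*(0:ℝ)^2 - ((1+0)^(p-2) + (1-0)^(p-2))/2 := by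
          norm_num [Real.one_rpow]
      _ ≤ _ := key
  · intro x hx
    have h1 : (0:ℝ) < 1 + x := by have := hx.1; linarith
    have h2 : (0:ℝ) < 1 - x := by have := hx.2; linarith
    have dA : HasDerivAt (fun y : ℝ => (1+y)^(p-2)) (1 * (p-2) * (1+x)^(p-2-1)) x :=
      ((hasDerivAt_id x).const_add 1).rpow_const (Or.inl h1.ne')
    have dB : HasDerivAt (fun y : ℝ => (1-y)^(p-2)) ((-1) * (p-2) * (1-x)^(p-2-1)) x :=
      ((hasDerivAt_id x).const_sub 1).rpow_const (Or.inl h2.ne')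
    have e : p - 2 - 1 = p - 3 := by ring
    rw [e] at dA dB
    have dsq : HasDerivAt (fun y : ℝ => 1 + (p-2)*(p-3)/2*y^2) ((p-2)*(p-3)/2*(2*x)) x := by
      have : HasDerivAt (fun y : ℝ => y^2) (2*x) x := by
        simpa using (hasDerivAt_pow 2 x)
      exact ((this.const_mul ((p-2)*(p-3)/2)).const_add 1)
    have := dsq.sub (((dA.add dB).div_const 2))
    exact this.congr_deriv (by ring)
  · intro x hx
    exact step_h2 p hp2 hp3 hx.1 (lt_of_le_of_lt hx.2 hs1)

private lemma step_f1 (p : ℝ) {s : ℝ} (hp2 : 2 ≤ p) (hp3 : p < 3) (hs0 : 0 ≤ s) (hs1 : s < 1) :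
    0 ≤ p*(p-1)*s + p*(p-1)*(p-2)*(p-3)/6*s^3 - p/2*((1+s)^(p-1) - (1-s)^(p-1)) := by
  have key := aux_mono
    (f := fun x : ℝ => p*(p-1)*x + p*(p-1)*(p-2)*(p-3)/6*x^3 - p/2*((1+x)^(p-1) - (1-x)^(p-1)))
    (f' := fun x : ℝ =>
      p*(p-1)*(1 + (p-2)*(p-3)/2*x^2 - ((1+x)^(p-2) + (1-x)^(p-2))/2)) hs0 ?_ ?_
  · calc (0:ℝ) = p*(p-1)*0 + p*(p-1)*(p-2)*(p-3)/6*(0:ℝ)^3 - p/2*((1+0)^(p-1) - (1-0)^(p-1)) := by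
          norm_num
      _ ≤ _ := key
  · intro x hx
    have h1 : (0:ℝ) < 1 + x := by have := hx.1; linarith
    have h2 : (0:ℝ) < 1 - x := by have := hx.2; linarith
    have dA : HasDerivAt (fun y : ℝ => (1+y)^(p-1)) (1 * (p-1) * (1+x)^(p-1-1)) x :=
      ((hasDerivAt_id x).const_add 1).rpow_const (Or.inl h1.ne')
    have dB : HasDerivAt (fun y : ℝ => (1-y)^(p-1)) ((-1) * (p-1) * (1-x)^(p-1-1)) x :=
      ((hasDerivAt_id x).const_sub 1).rpow_const (Or.inl h2.ne')
    have e : p - 1 - 1 = p - 2 := by ring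
    rw [e] at dA dB
    have dcube : HasDerivAt (fun y : ℝ => y^3) (3*x^2) x := by
      simpa using (hasDerivAt_pow 3 x)
    have := (((hasDerivAt_id x).const_mul (p*(p-1))).add
        (dcube.const_mul (p*(p-1)*(p-2)*(p-3)/6))).sub ((dA.sub dB).const_mul (p/2))
    exact this.congr_deriv (by ring)
  · intro x hx
    have h := step_h1 p hp2 hp3 hx.1 (lt_of_le_of_lt hx.2 hs1)
    have hpp : 0 ≤ p*(p-1) := by nlinarith
    exact mul_nonneg hpp h

private lemma key_lemma (p : ℝ) {s : ℝ} (hp2 : 2 ≤ p) (hp3 : p < 3) (hs0 : 0 ≤ s) (hs1 : s < 1) :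
    (1 / 2) * ((1 + s) ^ p + (1 - s) ^ p) ≤
      1 + (p / 2) * (p - 1) * s ^ 2 * (1 + (1 / 12) * (p - 2) * (p - 3) * s ^ 2) := by
  have key := aux_mono
    (f := fun x : ℝ => 1 + (p/2)*(p-1)*x^2*(1 + (1/12)*(p-2)*(p-3)*x^2)
      - (1/2)*((1+x)^p + (1-x)^p))
    (f' := fun x : ℝ =>
      p*(p-1)*x + p*(p-1)*(p-2)*(p-3)/6*x^3 - p/2*((1+x)^(p-1) - (1-x)^(p-1))) hs0 ?_ ?_
  · have h0 : (1:ℝ) + (p/2)*(p-1)*(0:ℝ)^2*(1 + (1/12)*(p-2)*(p-3)*(0:ℝ)^2)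
        - (1/2)*((1+0)^p + (1-0)^p) = 0 := by
      norm_num
    rw [h0] at key
    linarith
  · intro x hx
    have h1 : (0:ℝ) < 1 + x := by have := hx.1; linarith
    have h2 : (0:ℝ) < 1 - x := by have := hx.2; linarith
    have dA : HasDerivAt (fun y : ℝ => (1+y)^p) (1 * p * (1+x)^(p-1)) x :=
      ((hasDerivAt_id x).const_add 1).rpow_const (Or.inl h1.ne')
    have dB : HasDerivAt (fun y : ℝ => (1-y)^p) ((-1) * p * (1-x)^(p-1)) x :=
      ((hasDerivAt_id x).const_sub 1).rpow_const (Or.inl h2.ne')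
    have dsq : HasDerivAt (fun y : ℝ => y^2) (2*x) x := by
      simpa using (hasDerivAt_pow 2 x)
    have dq : HasDerivAt (fun y : ℝ => y^4) (4*x^3) x := by
      simpa using (hasDerivAt_pow 4 x)
    have dpoly : HasDerivAt
        (fun y : ℝ => 1 + (p/2)*(p-1)*y^2*(1 + (1/12)*(p-2)*(p-3)*y^2))
        ((p/2)*(p-1)*(2*x) + (p/2)*(p-1)*(1/12)*(p-2)*(p-3)*(4*x^3)) x := by
      have hrw : (fun y : ℝ => 1 + (p/2)*(p-1)*y^2*(1 + (1/12)*(p-2)*(p-3)*y^2))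
          = fun y : ℝ => 1 + ((p/2)*(p-1)*y^2 + ((p/2)*(p-1)*(1/12)*(p-2)*(p-3))*y^4) := by
        funext y; ring
      rw [hrw]
      exact ((dsq.const_mul ((p/2)*(p-1))).add
        (dq.const_mul ((p/2)*(p-1)*(1/12)*(p-2)*(p-3)))).const_add 1
    have := dpoly.sub ((dA.add dB).const_mul (1/2))
    exact this.congr_deriv (by ring)
  · intro x hx
    exact step_f1 p hp2 hp3 hx.1 (lt_of_le_of_lt hx.2 hs1)

theorem stmt_0 (p s : ℝ) (hp2 : 2 ≤ p) (hp3 : p < 3) (hs : |s| < 1) :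
    (1 / 2) * ((1 + s) ^ p + (1 - s) ^ p) ≤
      1 + (p / 2) * (p - 1) * s ^ 2 * (1 + (1 / 12) * (p - 2) * (p - 3) * s ^ 2) := by
  rcases abs_cases s with ⟨h1, h2⟩ | ⟨h1, h2⟩
  · exact key_lemma p hp2 hp3 (h1 ▸ abs_nonneg s) (h1 ▸ hs)
  · have habs : 0 ≤ -s := by linarith
    have := key_lemma p hp2 hp3 habs (by rw [← h1]; exact hs)
    have e1 : 1 + -s = 1 - s := by ring
    have e2 : 1 - -s = 1 + s := by ring
    rw [e1, e2] at this
    calc (1 / 2) * ((1 + s) ^ p + (1 - s) ^ p)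
        = (1 / 2) * ((1 - s) ^ p + (1 + s) ^ p) := by ring
      _ ≤ 1 + (p / 2) * (p - 1) * (-s) ^ 2 * (1 + (1 / 12) * (p - 2) * (p - 3) * (-s) ^ 2) := this
      _ = 1 + (p / 2) * (p - 1) * s ^ 2 * (1 + (1 / 12) * (p - 2) * (p - 3) * s ^ 2) := by ring
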